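/- Let f_first and f_last denote the maximal minors of the spread-out matrix 𝓜 obtained by deleting the first row, respectively the (t+1)-st row, regarded as polynomials in x over k[𝐚][y], and let res_E ∈ k[𝐚][y] be their resultant with respect to x (the determinant of their Sylvester matrix). Then res_E is bihomogeneous of bidegree (0, t·m_t) with respect to the ℤ²-grading; in particular, specializing all variables a_{i,j,k} to 0, res_E becomes ± y^{t·m_t}. -/

import Mathlib

open MvPolynomial

noncomputable section

namespace Stmt11

/-- The Sylvester matrix of two polynomials `p, q ∈ T[x]` of formal degrees `n` and `m`
respectively: a square matrix of size `m + n` whose first `m` columns carry the coefficients of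
`p` and whose last `n` columns carry the coefficients of `q` (ascending order, shifted copies).
Its determinant is the resultant `res_x(p, q)`. -/
def sylvester {T : Type*} [CommRing T] (n m : ℕ) (p q : Polynomial T) :
    Matrix (Fin (m + n)) (Fin (m + n)) T :=
  fun i j =>
    if (j : ℕ) < m then
      (if (j : ℕ) ≤ (i : ℕ) then p.coeff ((i : ℕ) - (j : ℕ)) else 0)
    else
      (if (j : ℕ) - m ≤ (i : ℕ) then q.coeff ((i : ℕ) - ((j : ℕ) - m)) else 0)

variable (k : Type*) [Field k] (t : ℕ) (m : ℕ → ℕ)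

/-- `D m j = d_{j+1} = m_{j+1} - m_j` (`0`-indexed version of the column degrees `d`). -/
def D (j : ℕ) : ℕ := m (j + 1) - m j

/-- The bound on the exponent index `k` of a parameter `a_{i,j,k}` sitting in (0-indexed) row
`i` and column `j`: it is `d_j` below the diagonal (`i > j`) and `d_i` on or above it. -/
def bound (i j : ℕ) : ℕ := if j < i then D m j else D m i

/-- Index type for the parameters `𝐚 = (a_{i,j,k})` of the spread-out matrix: triples
(0-indexed) `(i, j, k)` with `i ≤ t`, `j < t` and `k < bound i j`. -/
def Idx : Type := {v : ℕ × ℕ × ℕ // v.1 ≤ t ∧ v.2.1 < t ∧ v.2.2 < bound m v.1 v.2.1}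

/-- The coefficient ring `T = k[𝐚][y]`, realized as a polynomial ring in `y` (indexed by
`Unit`) and the `a_{i,j,k}` (indexed by `Idx t m`); `k[𝐚][x,y]` is then `T[x] = Polynomial T`
with `x` the polynomial variable. -/
abbrev T : Type _ := MvPolynomial (Unit ⊕ (Idx t m)) k

/-- The variable `y` of `T = k[𝐚][y]`. -/
def yv : T k t m := X (Sum.inl ())

/-- The entry perturbation `a_{i,j} = Σ_k a_{i,j,k} y^k ∈ k[𝐚][y]`. -/
def aij (i : Fin (t + 1)) (j : Fin t) : T k t m :=
  ∑ k' ∈ (Finset.range (bound m (i : ℕ) (j : ℕ))).attach,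
    X (Sum.inr (⟨((i : ℕ), (j : ℕ), (k' : ℕ)),
        ⟨Nat.lt_succ_iff.mp i.isLt, j.isLt, Finset.mem_range.mp k'.2⟩⟩ : Idx t m))
      * yv k t m ^ (k' : ℕ)

/-- The spread-out matrix `𝓜`, over `k[𝐚][y][x] = Polynomial (T k t m)`: the Hilbert–Burch
matrix `M_E` (with `y^{d_j}` on the diagonal and `-x` below it) perturbed by the `a_{i,j}`. -/
def spreadMatrix : Matrix (Fin (t + 1)) (Fin t) (Polynomial (T k t m)) :=
  fun i j =>
    (if (i : ℕ) = (j : ℕ) then Polynomial.C (yv k t m ^ D m (j : ℕ))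
      else if (i : ℕ) = (j : ℕ) + 1 then -Polynomial.X else 0)
    + Polynomial.C (aij k t m i j)

/-- The maximal minor of `𝓜` obtained by deleting the first row, a monic polynomial of degree
`t` in `x` over `k[𝐚][y]`. -/
def fFirst : Polynomial (T k t m) :=
  ((spreadMatrix k t m).submatrix (Fin.succAbove 0) id).det

/-- The maximal minor of `𝓜` obtained by deleting the `(t+1)`-st (last) row, a polynomial of
degree at most `t - 1` in `x` over `k[𝐚][y]`. -/
def fLast : Polynomial (T k t m) :=
  ((spreadMatrix k t m).submatrix (Fin.succAbove (Fin.last t)) id).det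

/-- The resultant `res_E ∈ k[𝐚][y]` of `f_first` and `f_last` with respect to `x`: the
determinant of their Sylvester matrix (of formal degrees `t` and `t - 1` in `x`). -/
def resE : T k t m := (sylvester t (t - 1) (fFirst k t m) (fLast k t m)).det

/-- The `ℤ²`-grading on `k[𝐚][y]`: `deg y = (0,1)` and
`deg a_{i,j,k} = (i - j, m_j - m_{i-1} - k)` (in the 0-indexed coordinates used here, the
parameter stored as `(i', j', k)` has degree `(i' - j', m_{j'+1} - m_{i'} - k)`). -/
def wt : (Unit ⊕ (Idx t m)) → ℤ × ℤ :=
  Sum.elim (fun _ => ((0 : ℤ), (1 : ℤ)))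
    (fun v => ((v.1.1 : ℤ) - (v.1.2.1 : ℤ),
      (m (v.1.2.1 + 1) : ℤ) - (m v.1.1 : ℤ) - (v.1.2.2 : ℤ)))

/-- Specialization of all the parameters `a_{i,j,k}` to `0` (and `y` to itself), a `k`-algebra
map `k[𝐚][y] → k[y]`. -/
def spec : T k t m →ₐ[k] Polynomial k :=
  aeval (Sum.elim (fun _ => (Polynomial.X : Polynomial k)) (fun _ => 0))

section Generic

variable {R : Type*} [CommRing R] {σ : Type*} {w : σ → ℤ × ℤ}

lemma IWH_zsmul {p : MvPolynomial σ R} {n : ℤ × ℤ} (z : ℤ)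
    (h : IsWeightedHomogeneous w p n) : IsWeightedHomogeneous w (z • p) n := by
  intro d hd
  exact h (fun hc => hd (by rw [MvPolynomial.coeff_smul, hc, smul_zero]))

/-- determinant of a matrix with bihomogeneous entries of degree `ρ i + γ j`. -/
lemma det_hom {N : ℕ} (A : Matrix (Fin N) (Fin N) (MvPolynomial σ R))
    (ρ γ : Fin N → ℤ × ℤ)
    (h : ∀ i j, IsWeightedHomogeneous w (A i j) (ρ i + γ j)) :
    IsWeightedHomogeneous w A.det (∑ i, ρ i + ∑ j, γ j) := by
  rw [Matrix.det_apply]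
  apply IsWeightedHomogeneous.sum
  intro s _
  rw [Units.smul_def]
  apply IWH_zsmul
  have e : ∑ i, ρ i + ∑ j, γ j = ∑ j, (ρ (s j) + γ j) := by
    rw [Finset.sum_add_distrib, Equiv.sum_comp s ρ]
  rw [e]
  exact IsWeightedHomogeneous.prod _ _ _ (fun j _ => h (s j) j)

/-- `p ∈ (MvPolynomial σ R)[x]` is bihomogeneous of degree `a` when `x` has degree `(1,0)`. -/
def XHom (w : σ → ℤ × ℤ) (a : ℤ × ℤ) (p : Polynomial (MvPolynomial σ R)) : Prop :=
  ∀ n : ℕ, IsWeightedHomogeneous w (p.coeff n) (a.1 - n, a.2)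

lemma XHom.zero (a : ℤ × ℤ) : XHom w a (0 : Polynomial (MvPolynomial σ R)) := by
  intro n; simpa using isWeightedHomogeneous_zero R w _

lemma XHom.add {a : ℤ × ℤ} {p q : Polynomial (MvPolynomial σ R)}
    (hp : XHom w a p) (hq : XHom w a q) : XHom w a (p + q) := by
  intro n; rw [Polynomial.coeff_add]; exact (hp n).add (hq n)

lemma XHom.mul {a b : ℤ × ℤ} {p q : Polynomial (MvPolynomial σ R)}
    (hp : XHom w a p) (hq : XHom w b q) : XHom w (a + b) (p * q) := by
  intro n
  rw [Polynomial.coeff_mul]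
  apply IsWeightedHomogeneous.sum
  rintro ⟨u, v⟩ huv
  have huv' : u + v = n := Finset.HasAntidiagonal.mem_antidiagonal.mp huv
  have := (hp u).mul (hq v)
  convert this using 1
  have : ((u : ℤ) + v : ℤ) = n := by exact_mod_cast congrArg (Nat.cast : ℕ → ℤ) huv'
  simp only [Prod.mk_add_mk, Prod.fst_add, Prod.snd_add, Prod.mk.injEq]
  constructor <;> [omega; trivial]

lemma XHom.one : XHom w ((0 : ℤ), (0 : ℤ)) (1 : Polynomial (MvPolynomial σ R)) := by
  intro n
  rcases eq_or_ne n 0 with h | h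
  · subst h; simp; exact isWeightedHomogeneous_one R w
  · rw [Polynomial.coeff_one, if_neg (by exact_mod_cast h)]
    exact isWeightedHomogeneous_zero R w _

lemma XHom.zsmul {a : ℤ × ℤ} {p : Polynomial (MvPolynomial σ R)} (z : ℤ)
    (hp : XHom w a p) : XHom w a (z • p) := by
  intro n; rw [Polynomial.coeff_smul]; exact IWH_zsmul z (hp n)

lemma XHom.prod {ι : Type*} (s : Finset ι) (f : ι → Polynomial (MvPolynomial σ R))
    (a : ι → ℤ × ℤ) (h : ∀ i ∈ s, XHom w (a i) (f i)) :
    XHom w (∑ i ∈ s, a i) (∏ i ∈ s, f i) := by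
  classical
  induction s using Finset.induction_on with
  | empty => simp; exact XHom.one
  | insert x s' hx ih =>
      rw [Finset.prod_insert hx, Finset.sum_insert hx]
      exact (h x (Finset.mem_insert_self x s')).mul
        (ih fun i hi => h i (Finset.mem_insert_of_mem hi))

lemma XHom.sum {ι : Type*} (s : Finset ι) (f : ι → Polynomial (MvPolynomial σ R))
    {a : ℤ × ℤ} (h : ∀ i ∈ s, XHom w a (f i)) : XHom w a (∑ i ∈ s, f i) := by
  intro n
  rw [Polynomial.finset_sum_coeff]
  exact IsWeightedHomogeneous.sum _ _ _ (fun i hi => h i hi n)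

lemma XHom.det {N : ℕ} (A : Matrix (Fin N) (Fin N) (Polynomial (MvPolynomial σ R)))
    (ρ γ : Fin N → ℤ × ℤ) (h : ∀ i j, XHom w (ρ i + γ j) (A i j)) :
    XHom w (∑ i, ρ i + ∑ j, γ j) A.det := by
  rw [Matrix.det_apply]
  apply XHom.sum
  intro s _
  rw [Units.smul_def]
  have e : ∑ i, ρ i + ∑ j, γ j = ∑ j, (ρ (s j) + γ j) := by
    rw [Finset.sum_add_distrib, Equiv.sum_comp s ρ]
  exact XHom.zsmul _ (e ▸ XHom.prod _ _ _ (fun j _ => h (s j) j))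

lemma XHom.C {a : ℤ × ℤ} {c : MvPolynomial σ R}
    (hc : IsWeightedHomogeneous w c a) : XHom w a (Polynomial.C c) := by
  intro n
  rcases eq_or_ne n 0 with h | h
  · subst h; simpa using hc
  · rw [Polynomial.coeff_C, if_neg h]; exact isWeightedHomogeneous_zero R w _

lemma XHom.X : XHom w ((1 : ℤ), (0 : ℤ)) (Polynomial.X : Polynomial (MvPolynomial σ R)) := by
  intro n
  rcases eq_or_ne n 1 with h | h
  · subst h; simp; exact isWeightedHomogeneous_one R w
  · rw [Polynomial.coeff_X, if_neg (fun hh => h hh.symm)]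
    exact isWeightedHomogeneous_zero R w _

lemma XHom.neg {a : ℤ × ℤ} {p : Polynomial (MvPolynomial σ R)} (hp : XHom w a p) :
    XHom w a (-p) := by
  have := XHom.zsmul (-1) hp
  simpa using this


end Generic
section Part2
variable {k : Type*} [Field k] {t : ℕ} {m : ℕ → ℕ}

lemma yv_hom : IsWeightedHomogeneous (wt t m) (yv k t m) ((0 : ℤ), (1 : ℤ)) :=
  isWeightedHomogeneous_X k (wt t m) (Sum.inl ())

lemma yv_pow_hom (n : ℕ) :
    IsWeightedHomogeneous (wt t m) (yv k t m ^ n) ((0 : ℤ), (n : ℤ)) := by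
  induction n with
  | zero => simp; exact isWeightedHomogeneous_one k (wt t m)
  | succ n ih =>
      have e : ((0 : ℤ), ((n + 1 : ℕ) : ℤ)) = ((0 : ℤ), (n : ℤ)) + ((0 : ℤ), (1 : ℤ)) := by
        simp [Prod.ext_iff]
      rw [pow_succ, e]
      exact ih.mul yv_hom

lemma aij_hom (i : Fin (t + 1)) (j : Fin t) :
    IsWeightedHomogeneous (wt t m) (aij k t m i j)
      ((i : ℤ) - (j : ℤ), (m ((j : ℕ) + 1) : ℤ) - (m (i : ℕ) : ℤ)) := by
  apply IsWeightedHomogeneous.sum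
  intro k' _
  have h1 := isWeightedHomogeneous_X k (wt t m)
    (Sum.inr (⟨((i : ℕ), (j : ℕ), (k' : ℕ)),
        ⟨Nat.lt_succ_iff.mp i.isLt, j.isLt, Finset.mem_range.mp k'.2⟩⟩ : Idx t m))
  have h2 := yv_pow_hom (k := k) (t := t) (m := m) ((k' : ℕ))
  have h3 := h1.mul h2
  convert h3 using 1
  · rfl
  change _ = ((((i : ℕ) : ℤ) - ((j : ℕ) : ℤ), (m ((j : ℕ) + 1) : ℤ) - (m (i : ℕ) : ℤ) - ((k' : ℕ) : ℤ)) + ((0 : ℤ), ((k' : ℕ) : ℤ)))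
  simp only [wt, Sum.elim_inr, Prod.mk_add_mk, Prod.ext_iff]
  constructor <;> ring

lemma entry_XHom (hmono : ∀ i, i < t → m i ≤ m (i + 1)) (i : Fin (t + 1)) (j : Fin t) :
    XHom (wt t m) ((i : ℤ) - (j : ℤ), (m ((j : ℕ) + 1) : ℤ) - (m (i : ℕ) : ℤ))
      (spreadMatrix k t m i j) := by
  show XHom (wt t m) _ (_ + _)
  apply XHom.add
  · split_ifs with h1 h2
    · have e : ((i : ℤ) - (j : ℤ), (m ((j : ℕ) + 1) : ℤ) - (m (i : ℕ) : ℤ))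
          = ((0 : ℤ), ((D m (j : ℕ) : ℕ) : ℤ)) := by
        have hle := hmono (j : ℕ) j.isLt
        simp only [Prod.ext_iff, D]
        rw [h1]
        push_cast [Nat.cast_sub hle]
        constructor <;> ring
      rw [e]
      exact XHom.C (yv_pow_hom _)
    · have e : ((i : ℤ) - (j : ℤ), (m ((j : ℕ) + 1) : ℤ) - (m (i : ℕ) : ℤ))
          = ((1 : ℤ), (0 : ℤ)) := by
        simp only [Prod.ext_iff]
        rw [h2]
        refine ⟨by push_cast; ring, by push_cast; ring⟩
      rw [e]
      exact XHom.X.neg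
    · exact XHom.zero _
  · exact XHom.C (aij_hom i j)

lemma fFirst_XHom (hmono : ∀ i, i < t → m i ≤ m (i + 1)) :
    XHom (wt t m) ((t : ℤ), (0 : ℤ)) (fFirst k t m) := by
  have h := XHom.det (w := wt t m) ((spreadMatrix k t m).submatrix (Fin.succAbove 0) id)
    (fun i => ((i : ℤ) + 1, -(m ((i : ℕ) + 1) : ℤ)))
    (fun j => (-(j : ℤ), (m ((j : ℕ) + 1) : ℤ))) ?_
  · have e : (∑ i : Fin t, ((i : ℤ) + 1, -(m ((i : ℕ) + 1) : ℤ)))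
        + ∑ j : Fin t, (-(j : ℤ), (m ((j : ℕ) + 1) : ℤ)) = ((t : ℤ), (0 : ℤ)) := by
      rw [← Finset.sum_add_distrib]
      have e2 : ∀ i : Fin t, (((i : ℤ) + 1, -(m ((i : ℕ) + 1) : ℤ))
          + (-(i : ℤ), (m ((i : ℕ) + 1) : ℤ))) = ((1 : ℤ), (0 : ℤ)) := by
        intro i; simp only [Prod.mk_add_mk, Prod.mk.injEq]; constructor <;> ring
      rw [Finset.sum_congr rfl (fun i _ => e2 i), Finset.sum_const, Finset.card_univ,
        Fintype.card_fin]
      simp [Prod.ext_iff]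
    rw [fFirst]
    exact e ▸ h
  · intro i j
    simp only [Matrix.submatrix_apply, id, Fin.succAbove_zero]
    have h2 := entry_XHom (k := k) hmono i.succ j
    have e : ((i.succ : ℤ) - (j : ℤ), (m ((j : ℕ) + 1) : ℤ) - (m ((i.succ : ℕ)) : ℤ))
        = (((i : ℤ) + 1, -(m ((i : ℕ) + 1) : ℤ)) + (-(j : ℤ), (m ((j : ℕ) + 1) : ℤ))) := by
      simp [Prod.ext_iff, Fin.val_succ]
      constructor <;> ring
    exact e ▸ h2

lemma fLast_XHom (hm0 : m 0 = 0) (hmono : ∀ i, i < t → m i ≤ m (i + 1)) :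
    XHom (wt t m) ((0 : ℤ), (m t : ℤ)) (fLast k t m) := by
  have h := XHom.det (w := wt t m) ((spreadMatrix k t m).submatrix (Fin.succAbove (Fin.last t)) id)
    (fun i => ((i : ℤ), -(m (i : ℕ) : ℤ)))
    (fun j => (-(j : ℤ), (m ((j : ℕ) + 1) : ℤ))) ?_
  · have e : (∑ i : Fin t, ((i : ℤ), -(m (i : ℕ) : ℤ)))
        + ∑ j : Fin t, (-(j : ℤ), (m ((j : ℕ) + 1) : ℤ)) = ((0 : ℤ), (m t : ℤ)) := by
      rw [← Finset.sum_add_distrib]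
      have e2 : ∀ i : Fin t, (((i : ℤ), -(m (i : ℕ) : ℤ))
          + (-(i : ℤ), (m ((i : ℕ) + 1) : ℤ)))
          = ((0 : ℤ), (m ((i : ℕ) + 1) : ℤ) - (m (i : ℕ) : ℤ)) := by
        intro i; simp only [Prod.mk_add_mk, Prod.mk.injEq]; constructor <;> ring
      rw [Finset.sum_congr rfl (fun i _ => e2 i)]
      have e3 : ∑ i : Fin t, (((0 : ℤ), (m ((i : ℕ) + 1) : ℤ) - (m (i : ℕ) : ℤ)))
          = ((0 : ℤ), ∑ i : Fin t, ((m ((i : ℕ) + 1) : ℤ) - (m (i : ℕ) : ℤ))) := by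
        rw [Prod.ext_iff]
        exact ⟨by simpa using (Prod.fst_sum (s := Finset.univ)
            (f := fun i : Fin t => (((0 : ℤ), (m ((i : ℕ) + 1) : ℤ) - (m (i : ℕ) : ℤ))))),
          by simpa using (Prod.snd_sum (s := Finset.univ)
            (f := fun i : Fin t => (((0 : ℤ), (m ((i : ℕ) + 1) : ℤ) - (m (i : ℕ) : ℤ)))))⟩
      rw [e3, Fin.sum_univ_eq_sum_range (fun i => ((m (i + 1) : ℤ) - (m i : ℤ))) t,
        Finset.sum_range_sub (fun i => (m i : ℤ)), hm0]
      simp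
    rw [fLast]
    exact e ▸ h
  · intro i j
    simp only [Matrix.submatrix_apply, id, Fin.succAbove_last]
    have h2 := entry_XHom (k := k) hmono i.castSucc j
    have e : ((i.castSucc : ℤ) - (j : ℤ), (m ((j : ℕ) + 1) : ℤ) - (m ((i.castSucc : ℕ)) : ℤ))
        = (((i : ℤ), -(m (i : ℕ) : ℤ)) + (-(j : ℤ), (m ((j : ℕ) + 1) : ℤ))) := by
      simp [Prod.ext_iff, Fin.coe_castSucc]
      constructor <;> ring
    exact e ▸ h2

end Part2
section Part3
variable {k : Type*} [Field k] {t : ℕ} {m : ℕ → ℕ}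

lemma card_filter_lt {N : ℕ} (a : ℕ) (ha : a ≤ N) :
    (Finset.univ.filter (fun j : Fin N => (j : ℕ) < a)).card = a := by
  rw [Finset.card_filter]
  rw [Fin.sum_univ_eq_sum_range (fun j => if j < a then (1 : ℕ) else 0) N]
  have e : ∀ j, (if j < a then (1 : ℕ) else 0) = if j ∈ Finset.range a then 1 else 0 := by
    intro j; simp [Finset.mem_range]
  simp_rw [e]
  rw [Finset.sum_ite_mem]
  rw [Finset.inter_eq_right.mpr (Finset.range_subset_range.mpr ha)]
  simp

lemma resE_hom (ht : 1 ≤ t) (hm0 : m 0 = 0) (hmono : ∀ i, i < t → m i ≤ m (i + 1)) :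
    IsWeightedHomogeneous (wt t m) (resE k t m) ((0 : ℤ), (t * m t : ℤ)) := by
  have hF := fFirst_XHom (k := k) hmono
  have hL := fLast_XHom (k := k) hm0 hmono
  have h := det_hom (w := wt t m) (sylvester t (t - 1) (fFirst k t m) (fLast k t m))
    (fun i => (-(i : ℤ), (0 : ℤ)))
    (fun j => if (j : ℕ) < t - 1 then ((t : ℤ) + (j : ℤ), (0 : ℤ))
      else ((j : ℤ) - (t : ℤ) + 1, (m t : ℤ))) ?_
  · have e : (∑ i : Fin (t - 1 + t), (-(i : ℤ), (0 : ℤ)))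
        + ∑ j : Fin (t - 1 + t), (if (j : ℕ) < t - 1 then ((t : ℤ) + (j : ℤ), (0 : ℤ))
          else ((j : ℤ) - (t : ℤ) + 1, (m t : ℤ)))
        = ((0 : ℤ), (t * m t : ℤ)) := by
      rw [← Finset.sum_add_distrib]
      have e2 : ∀ j : Fin (t - 1 + t), ((-(j : ℤ), (0 : ℤ))
          + (if (j : ℕ) < t - 1 then ((t : ℤ) + (j : ℤ), (0 : ℤ))
            else ((j : ℤ) - (t : ℤ) + 1, (m t : ℤ))))
          = (if (j : ℕ) < t - 1 then ((t : ℤ), (0 : ℤ)) else ((1 : ℤ) - (t : ℤ), (m t : ℤ))) := by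
        intro j
        split_ifs <;> (simp only [Prod.mk_add_mk, Prod.mk.injEq]; constructor <;> ring)
      rw [Finset.sum_congr rfl (fun j _ => e2 j), Finset.sum_ite, Finset.sum_const,
        Finset.sum_const]
      have hc1 : (Finset.univ.filter (fun j : Fin (t - 1 + t) => (j : ℕ) < t - 1)).card
          = t - 1 := card_filter_lt _ (by omega)
      have hc2 : (Finset.univ.filter (fun j : Fin (t - 1 + t) => ¬ (j : ℕ) < t - 1)).card
          = t := by
        have h3 := Finset.card_filter_add_card_filter_not
          (s := (Finset.univ : Finset (Fin (t - 1 + t)))) (p := fun j => (j : ℕ) < t - 1)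
        rw [Finset.card_univ, Fintype.card_fin] at h3
        omega
      rw [hc1, hc2]
      simp only [Prod.smul_mk, smul_zero, Prod.mk_add_mk, Prod.mk.injEq, smul_eq_mul,
        nsmul_eq_mul]
      push_cast [Nat.cast_sub ht]
      constructor <;> ring
    rw [resE]
    exact e ▸ h
  · intro i j
    show IsWeightedHomogeneous (wt t m)
      (if (j : ℕ) < t - 1 then
        (if (j : ℕ) ≤ (i : ℕ) then (fFirst k t m).coeff ((i : ℕ) - (j : ℕ)) else 0)
      else
        (if (j : ℕ) - (t - 1) ≤ (i : ℕ) then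
          (fLast k t m).coeff ((i : ℕ) - ((j : ℕ) - (t - 1))) else 0)) _
    by_cases h1 : (j : ℕ) < t - 1
    · rw [if_pos h1]
      by_cases h2 : (j : ℕ) ≤ (i : ℕ)
      · rw [if_pos h2]
        have e : ((t : ℤ) - (((i : ℕ) - (j : ℕ) : ℕ) : ℤ), (0 : ℤ))
            = ((-(i : ℤ), (0 : ℤ)) + ((t : ℤ) + (j : ℤ), (0 : ℤ))) := by
          simp only [Prod.mk_add_mk, Prod.mk.injEq]
          constructor <;> omega
        have := hF ((i : ℕ) - (j : ℕ))
        rw [e] at this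
        simpa [h1] using this
      · rw [if_neg h2]
        exact isWeightedHomogeneous_zero _ _ _
    · rw [if_neg h1]
      by_cases h3 : (j : ℕ) - (t - 1) ≤ (i : ℕ)
      · rw [if_pos h3]
        have e : ((0 : ℤ) - (((i : ℕ) - ((j : ℕ) - (t - 1)) : ℕ) : ℤ), (m t : ℤ))
            = ((-(i : ℤ), (0 : ℤ)) + ((j : ℤ) - (t : ℤ) + 1, (m t : ℤ))) := by
          simp only [Prod.mk_add_mk, Prod.mk.injEq]
          constructor <;> omega
        have := hL ((i : ℕ) - ((j : ℕ) - (t - 1)))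
        rw [e] at this
        simpa [h1] using this
      · rw [if_neg h3]
        exact isWeightedHomogeneous_zero _ _ _

end Part3
section Part4
variable {k : Type*} [Field k] {t : ℕ} {m : ℕ → ℕ}

lemma sylvester_map {A B : Type*} [CommRing A] [CommRing B] (f : A →+* B) (n M : ℕ)
    (p q : Polynomial A) :
    (sylvester n M p q).map f = sylvester n M (p.map f) (q.map f) := by
  ext i j
  simp only [sylvester, Matrix.map_apply, Polynomial.coeff_map]
  split_ifs <;> simp

lemma spec_yv : spec k t m (yv k t m) = Polynomial.X := by
  simp [spec, yv]

lemma spec_aij (i : Fin (t + 1)) (j : Fin t) : spec k t m (aij k t m i j) = 0 := by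
  rw [spec, aij, map_sum]
  apply Finset.sum_eq_zero
  intro x _
  erw [map_mul, aeval_X]
  exact zero_mul _

lemma spec_spreadMatrix (i : Fin (t + 1)) (j : Fin t) :
    (spreadMatrix k t m i j).map (spec k t m).toRingHom
      = (if (i : ℕ) = (j : ℕ) then Polynomial.C (Polynomial.X ^ D m (j : ℕ))
        else if (i : ℕ) = (j : ℕ) + 1 then -Polynomial.X
        else (0 : Polynomial (Polynomial k))) := by
  simp only [spreadMatrix]
  rw [Polynomial.map_add]
  have h2 : (Polynomial.C (aij k t m i j)).map (spec k t m).toRingHom = 0 := by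
    rw [Polynomial.map_C]
    simp [spec_aij]
  rw [h2, add_zero]
  split_ifs with h hh
  · rw [Polynomial.map_C]
    congr 1
    rw [map_pow]
    simp [spec_yv]
  · simp
  · simp

lemma sum_D (hm0 : m 0 = 0) (hmono : ∀ i, i < t → m i ≤ m (i + 1)) :
    ∀ n, n ≤ t → ∑ i ∈ Finset.range n, D m i = m n := by
  intro n
  induction n with
  | zero => intro _; simpa using hm0.symm
  | succ n ih =>
      intro hn
      rw [Finset.sum_range_succ, ih (by omega), D]
      have := hmono n (by omega)
      omega

lemma spec_fFirst :
    (fFirst k t m).map (spec k t m).toRingHom = (-Polynomial.X) ^ t := by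
  rw [fFirst, ← Polynomial.coe_mapRingHom, RingHom.map_det, RingHom.mapMatrix_apply]
  have hB : ((spreadMatrix k t m).submatrix (Fin.succAbove 0) id).map
      (Polynomial.mapRingHom (spec k t m).toRingHom)
      = Matrix.of (fun (i j : Fin t) =>
        (if (i : ℕ) + 1 = (j : ℕ) then Polynomial.C (Polynomial.X ^ D m (j : ℕ))
          else if (i : ℕ) = (j : ℕ) then -Polynomial.X
          else (0 : Polynomial (Polynomial k)))) := by
    ext i j : 2
    simp only [Matrix.map_apply, Matrix.submatrix_apply, id, Fin.succAbove_zero,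
      Polynomial.coe_mapRingHom, Matrix.of_apply]
    rw [spec_spreadMatrix]
    simp only [Fin.val_succ]
    split_ifs <;> first | rfl | (exfalso; omega)
  rw [hB]
  rw [Matrix.det_of_upperTriangular (by
    intro i j hij
    have h' : (j : ℕ) < (i : ℕ) := hij
    simp only [Matrix.of_apply]
    split_ifs <;> first | rfl | (exfalso; omega))]
  have hd : ∀ i : Fin t, (Matrix.of (fun (i j : Fin t) =>
        (if (i : ℕ) + 1 = (j : ℕ) then Polynomial.C (Polynomial.X ^ D m (j : ℕ))
          else if (i : ℕ) = (j : ℕ) then -Polynomial.X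
          else (0 : Polynomial (Polynomial k))))) i i
      = -(Polynomial.X : Polynomial (Polynomial k)) := by
    intro i
    simp only [Matrix.of_apply]
    split_ifs <;> first | rfl | (exfalso; omega)
  rw [Finset.prod_congr rfl (fun i _ => hd i), Finset.prod_const, Finset.card_univ,
    Fintype.card_fin]

lemma spec_fLast (hm0 : m 0 = 0) (hmono : ∀ i, i < t → m i ≤ m (i + 1)) :
    (fLast k t m).map (spec k t m).toRingHom = Polynomial.C (Polynomial.X ^ m t) := by
  rw [fLast, ← Polynomial.coe_mapRingHom, RingHom.map_det, RingHom.mapMatrix_apply]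
  have hB : ((spreadMatrix k t m).submatrix (Fin.succAbove (Fin.last t)) id).map
      (Polynomial.mapRingHom (spec k t m).toRingHom)
      = Matrix.of (fun (i j : Fin t) =>
        (if (i : ℕ) = (j : ℕ) then Polynomial.C (Polynomial.X ^ D m (j : ℕ))
          else if (i : ℕ) = (j : ℕ) + 1 then -Polynomial.X
          else (0 : Polynomial (Polynomial k)))) := by
    ext i j : 2
    simp only [Matrix.map_apply, Matrix.submatrix_apply, id, Fin.succAbove_last,
      Polynomial.coe_mapRingHom, Matrix.of_apply]
    rw [spec_spreadMatrix]
    simp [Fin.coe_castSucc]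
  rw [hB]
  rw [Matrix.det_of_lowerTriangular _ (by
    intro i j hij
    have h' : (i : ℕ) < (j : ℕ) := hij
    simp only [Matrix.of_apply]
    split_ifs <;> first | rfl | (exfalso; omega))]
  have hd : ∀ i : Fin t, (Matrix.of (fun (i j : Fin t) =>
        (if (i : ℕ) = (j : ℕ) then Polynomial.C (Polynomial.X ^ D m (j : ℕ))
          else if (i : ℕ) = (j : ℕ) + 1 then -Polynomial.X
          else (0 : Polynomial (Polynomial k))))) i i
      = Polynomial.C (Polynomial.X ^ D m (i : ℕ) : Polynomial k) := by
    intro i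
    simp only [Matrix.of_apply]
    split_ifs <;> first | rfl | (exfalso; omega)
  rw [Finset.prod_congr rfl (fun i _ => hd i), ← map_prod]
  congr 1
  rw [Finset.prod_pow_eq_pow_sum]
  congr 1
  rw [Fin.sum_univ_eq_sum_range (fun i => D m i) t]
  exact sum_D hm0 hmono t le_rfl

/-- the rotation permutation underlying the specialized Sylvester matrix -/
def rotPerm (t : ℕ) : Equiv.Perm (Fin (t - 1 + t)) where
  toFun j := ⟨if (j : ℕ) < t - 1 then (j : ℕ) + t else (j : ℕ) - (t - 1), by
    have := j.isLt; split_ifs <;> omega⟩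
  invFun i := ⟨if (i : ℕ) < t then (i : ℕ) + (t - 1) else (i : ℕ) - t, by
    have := i.isLt; split_ifs <;> omega⟩
  left_inv j := by
    have := j.isLt
    apply Fin.ext
    dsimp only
    split_ifs <;> omega
  right_inv i := by
    have := i.isLt
    apply Fin.ext
    dsimp only
    split_ifs <;> omega

lemma spec_resE (ht : 1 ≤ t) (hm0 : m 0 = 0) (hmono : ∀ i, i < t → m i ≤ m (i + 1)) :
    spec k t m (resE k t m) = Polynomial.X ^ (t * m t) ∨
      spec k t m (resE k t m) = -(Polynomial.X ^ (t * m t)) := by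
  have hdet : spec k t m (resE k t m)
      = (sylvester t (t - 1) ((-Polynomial.X) ^ t)
          (Polynomial.C (Polynomial.X ^ m t))).det := by
    rw [resE]
    have h0 := (spec k t m).toRingHom.map_det
      (sylvester t (t - 1) (fFirst k t m) (fLast k t m))
    rw [show (spec k t m) (sylvester t (t - 1) (fFirst k t m) (fLast k t m)).det
        = (spec k t m).toRingHom (sylvester t (t - 1) (fFirst k t m) (fLast k t m)).det
        from rfl, h0, RingHom.mapMatrix_apply, sylvester_map, spec_fFirst,
      spec_fLast hm0 hmono]
  set c : Fin (t - 1 + t) → Polynomial k := fun j =>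
    if (j : ℕ) < t - 1 then (-1) ^ t else Polynomial.X ^ m t with hc
  have hPc : ∀ n : ℕ, ((-Polynomial.X : Polynomial (Polynomial k)) ^ t).coeff n
      = if n = t then (-1) ^ t else 0 := by
    intro n
    have hP : ((-Polynomial.X : Polynomial (Polynomial k))) ^ t
        = Polynomial.C ((-1 : Polynomial k) ^ t) * Polynomial.X ^ t := by
      rw [neg_pow (Polynomial.X : Polynomial (Polynomial k)) t, map_pow, map_neg, map_one]
    rw [hP, Polynomial.coeff_C_mul, Polynomial.coeff_X_pow]
    split_ifs <;> simp
  have hQc : ∀ n : ℕ, ((Polynomial.C (Polynomial.X ^ m t) :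
      Polynomial (Polynomial k))).coeff n = if n = 0 then Polynomial.X ^ m t else 0 := by
    intro n; rw [Polynomial.coeff_C]
  have hS : sylvester t (t - 1) ((-Polynomial.X) ^ t)
      (Polynomial.C (Polynomial.X ^ m t) : Polynomial (Polynomial k))
      = (Matrix.diagonal c).submatrix (rotPerm t).symm id := by
    ext i j : 2
    have hi := i.isLt
    have hj := j.isLt
    have hsymm : (((rotPerm t).symm i : Fin (t - 1 + t)) : ℕ)
        = if (i : ℕ) < t then (i : ℕ) + (t - 1) else (i : ℕ) - t := rfl
    simp only [sylvester, Matrix.submatrix_apply, id_eq, Matrix.diagonal_apply, hPc, hQc, hc]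
    by_cases h : ((rotPerm t).symm i) = j
    · rw [if_pos h]
      have hv : (((rotPerm t).symm i : Fin (t - 1 + t)) : ℕ) = (j : ℕ) := by rw [h]
      rw [hsymm] at hv
      rw [hsymm]
      split_ifs at hv ⊢ <;> first | rfl | (exfalso; omega)
    · rw [if_neg h]
      have hv : (((rotPerm t).symm i : Fin (t - 1 + t)) : ℕ) ≠ (j : ℕ) := fun hh =>
        h (Fin.ext hh)
      rw [hsymm] at hv
      split_ifs at hv ⊢ <;> first | rfl | (exfalso; omega)
  rw [hdet, hS, Matrix.det_permute, Matrix.det_diagonal]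
  have hprod : ∏ i, c i = Polynomial.X ^ (t * m t) := by
    rw [hc]
    rw [Finset.prod_ite, Finset.prod_const, Finset.prod_const]
    have hc1 : (Finset.univ.filter (fun j : Fin (t - 1 + t) => (j : ℕ) < t - 1)).card
        = t - 1 := card_filter_lt _ (by omega)
    have hc2 : (Finset.univ.filter (fun j : Fin (t - 1 + t) => ¬ (j : ℕ) < t - 1)).card
        = t := by
      have h3 := Finset.card_filter_add_card_filter_not
        (s := (Finset.univ : Finset (Fin (t - 1 + t)))) (p := fun j => (j : ℕ) < t - 1)
      rw [Finset.card_univ, Fintype.card_fin] at h3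
      omega
    rw [hc1, hc2, ← pow_mul, ← pow_mul]
    have heven : Even (t * (t - 1)) := by
      have := Nat.even_mul_succ_self (t - 1)
      rw [show t - 1 + 1 = t from by omega] at this
      rwa [mul_comm]
    rw [Even.neg_one_pow heven, one_mul, mul_comm (m t) t]
  rw [hprod]
  rcases Int.units_eq_one_or (Equiv.Perm.sign (rotPerm t).symm) with h | h <;> rw [h]
  · left; simp
  · right; simp

end Part4

/-- The resultant `res_E` of the first and last maximal minors of the
spread-out matrix is bihomogeneous of bidegree `(0, t·m_t)` for the `ℤ²`-grading; in
particular, specializing all the variables `a_{i,j,k}` to `0` it becomes `± y^{t·m_t}`. -/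
theorem stmt11 (ht : 1 ≤ t) (hm0 : m 0 = 0) (hmono : ∀ i, i < t → m i ≤ m (i + 1)) :
    IsWeightedHomogeneous (wt t m) (resE k t m) ((0 : ℤ), (t * m t : ℤ)) ∧
    (spec k t m (resE k t m) = Polynomial.X ^ (t * m t) ∨
      spec k t m (resE k t m) = -(Polynomial.X ^ (t * m t))) :=
  ⟨resE_hom ht hm0 hmono, spec_resE ht hm0 hmono⟩

end Stmt11
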